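/- For odd n = 2k+1 with k ≥ 2 and the weights of the large-volume construction, ∑_{i=2}^{k-1} a_{2i-1} + a_{n-1} + a_1 = a_n; that is, (h/2)(1/s_{k-1} + ... + 1/s_2) + h/4 + 1 = h/3 where h = 2(s_k - 1). -/
import Mathlib


def sylvester : ℕ → ℕ
  | 0 => 2
  | n + 1 => sylvester n * (sylvester n - 1) + 1

lemma sylvester_two_le (n : ℕ) : 2 ≤ sylvester n := by
  induction n with
  | zero => simp [sylvester]
  | succ n ih =>
    have h1 : 1 ≤ sylvester n - 1 := by omega
    have : 2 * 1 ≤ sylvester n * (sylvester n - 1) := Nat.mul_le_mul ih h1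
    simp [sylvester]; omega

lemma sylvester_dvd_sub_one {j k : ℕ} (hjk : j < k) :
    sylvester j ∣ sylvester k - 1 := by
  induction k with
  | zero => omega
  | succ k ih =>
    have hs : sylvester (k + 1) - 1 = sylvester k * (sylvester k - 1) := by
      simp [sylvester]
    rw [hs]
    rcases Nat.lt_succ_iff_lt_or_eq.mp hjk with hj | hj
    · exact (ih hj).mul_left _
    · subst hj; exact Dvd.intro _ rfl

lemma key (k : ℕ) (hk : 2 ≤ k) :
    6 * (∑ j ∈ Finset.Icc 2 (k - 1), (sylvester k - 1) / sylvester j) + 6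
      = sylvester k - 1 := by
  induction k, hk using Nat.le_induction with
  | base => decide
  | succ k hk ih =>
    have hks : k - 1 + 1 = k := by omega
    have hsum : Finset.Icc 2 (k + 1 - 1) = Finset.Icc 2 (k - 1 + 1) := by
      rw [hks]; rfl
    rw [hsum, Finset.sum_Icc_succ_top (by omega), hks]
    have hs : sylvester (k + 1) - 1 = sylvester k * (sylvester k - 1) := by
      simp [sylvester]
    have hlast : (sylvester (k + 1) - 1) / sylvester k = sylvester k - 1 := by
      rw [hs, Nat.mul_div_cancel_left _ (by have := sylvester_two_le k; omega)]
    have hcongr : ∀ j ∈ Finset.Icc 2 (k - 1),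
        (sylvester (k + 1) - 1) / sylvester j
          = sylvester k * ((sylvester k - 1) / sylvester j) := by
      intro j hj
      simp only [Finset.mem_Icc] at hj
      rw [hs, Nat.mul_div_assoc _ (sylvester_dvd_sub_one (by omega))]
    rw [Finset.sum_congr rfl hcongr, hlast, ← Finset.mul_sum]
    set S := ∑ j ∈ Finset.Icc 2 (k - 1), (sylvester k - 1) / sylvester j with hS
    have h2 := sylvester_two_le k
    obtain ⟨t, ht⟩ : ∃ t, sylvester k = t + 1 := ⟨sylvester k - 1, by omega⟩
    rw [hs, ht]
    have ht' : t = 6 * S + 6 := by omega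
    subst ht'
    simp only [Nat.add_sub_cancel]
    ring

theorem large_volume_an_relation (k : ℕ) (hk : 2 ≤ k)
    (h : ℕ) (hh : h = 2 * (sylvester k - 1)) :
    (∑ i ∈ Finset.Icc 2 (k - 1), h / (2 * sylvester (k + 1 - i))) + h / 4 + 1
      = h / 3 := by
  have hcongr : ∀ i ∈ Finset.Icc 2 (k - 1),
      h / (2 * sylvester (k + 1 - i)) = (sylvester k - 1) / sylvester (k + 1 - i) := by
    intro i _
    rw [hh, Nat.mul_div_mul_left _ _ (by norm_num)]
  rw [Finset.sum_congr rfl hcongr]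
  have hre : (∑ i ∈ Finset.Icc 2 (k - 1), (sylvester k - 1) / sylvester (k + 1 - i))
      = ∑ j ∈ Finset.Icc 2 (k - 1), (sylvester k - 1) / sylvester j := by
    apply Finset.sum_nbij' (fun i => k + 1 - i) (fun j => k + 1 - j) <;>
      intro a ha <;> simp only [Finset.mem_Icc] at * <;> omega
  rw [hre]
  have hkey := key k hk
  set S := ∑ j ∈ Finset.Icc 2 (k - 1), (sylvester k - 1) / sylvester j
  subst hh
  omega
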